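/- Let G be a locally compact Hausdorff abelian topological group with a Radon (Haar) measure μ. Fix h ≥ 1, and let (θ_{h,q})_{q≥1} be a decreasing sequence of nonnegative reals with limit θ_h. Let (A_q)_{q≥1} be a decreasing sequence of compact subsets of G with μ(hA_q) = θ_{h,q} for all q, with A = ⋂_q A_q nonempty. Then μ(hA) = θ_h. -/

import Mathlib

/-- Sum of a nonempty tuple in an additive semigroup. -/
def finSum {S : Type*} [Add S] : ∀ {n : ℕ}, (Fin (n + 1) → S) → S
  | 0, f => f 0
  | n + 1, f => finSum (fun i => f i.castSucc) + f (Fin.last (n + 1))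

/-- The `h`-fold sumset of `A`: all sums of `h` not necessarily distinct elements of `A`. -/
def sumset {S : Type*} [Add S] (A : Set S) : ℕ → Set S
  | 0 => ∅
  | n + 1 => {x | ∃ f : Fin (n + 1) → S, (∀ i, f i ∈ A) ∧ finSum f = x}

lemma continuous_finSum {G : Type*} [AddCommGroup G] [TopologicalSpace G]
    [IsTopologicalAddGroup G] : ∀ n : ℕ, Continuous (finSum : (Fin (n + 1) → G) → G)
  | 0 => continuous_apply 0
  | n + 1 => by
    have h1 : Continuous fun f : Fin (n + 2) → G => finSum (fun i => f i.castSucc) :=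
      (continuous_finSum n).comp (continuous_pi fun i => continuous_apply _)
    have h2 : Continuous fun f : Fin (n + 2) → G => f (Fin.last (n + 1)) :=
      continuous_apply _
    exact h1.add h2

lemma sumset_eq_image {G : Type*} [AddCommGroup G] (A : Set G) (n : ℕ) :
    sumset A (n + 1) = finSum '' (Set.univ.pi fun _ : Fin (n + 1) => A) := by
  ext x
  constructor
  · rintro ⟨f, hf, rfl⟩
    exact ⟨f, fun i _ => hf i, rfl⟩
  · rintro ⟨f, hf, rfl⟩
    exact ⟨f, fun i => hf i (Set.mem_univ i), rfl⟩

lemma sumset_compact {G : Type*} [AddCommGroup G] [TopologicalSpace G]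
    [IsTopologicalAddGroup G] {A : Set G} (hA : IsCompact A) (n : ℕ) :
    IsCompact (sumset A n) := by
  cases n with
  | zero => exact isCompact_empty
  | succ n =>
    rw [sumset_eq_image]
    exact ((isCompact_univ_pi fun _ => hA).image (continuous_finSum n))

lemma sumset_mono {G : Type*} [AddCommGroup G] {A B : Set G} (hAB : A ⊆ B) (n : ℕ) :
    sumset A n ⊆ sumset B n := by
  cases n with
  | zero => exact subset_rfl
  | succ n => rintro x ⟨f, hf, rfl⟩; exact ⟨f, fun i => hAB (hf i), rfl⟩

lemma sumset_iInter {G : Type*} [AddCommGroup G] [TopologicalSpace G]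
    [IsTopologicalAddGroup G] [T2Space G]
    (Aq : ℕ → Set G) (hcomp : ∀ q, IsCompact (Aq q))
    (hanti : Antitone Aq) (n : ℕ) :
    sumset (⋂ q, Aq q) (n + 1) = ⋂ q, sumset (Aq q) (n + 1) := by
  apply subset_antisymm
  · exact Set.subset_iInter fun q => sumset_mono (Set.iInter_subset Aq q) _
  · intro x hx
    set K : ℕ → Set (Fin (n + 1) → G) :=
      fun q => {f | (∀ i, f i ∈ Aq q) ∧ finSum f = x} with hK
    have hKc : ∀ q, IsCompact (K q) := by
      intro q
      have h1 : K q = (Set.univ.pi fun _ : Fin (n + 1) => Aq q) ∩ finSum ⁻¹' {x} := by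
        ext f; simp [hK, Set.mem_pi, and_comm]
      rw [h1]
      exact (isCompact_univ_pi fun _ => hcomp q).inter_right
        (IsClosed.preimage (continuous_finSum n) isClosed_singleton)
    have hKcl : ∀ q, IsClosed (K q) := fun q => (hKc q).isClosed
    have hKne : ∀ q, (K q).Nonempty := by
      intro q
      obtain ⟨f, hf, hfx⟩ := Set.mem_iInter.mp hx q
      exact ⟨f, hf, hfx⟩
    have hKanti : ∀ q, K (q + 1) ⊆ K q := by
      rintro q f ⟨hf, hfx⟩
      exact ⟨fun i => hanti (Nat.le_succ q) (hf i), hfx⟩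
    obtain ⟨f, hf⟩ := IsCompact.nonempty_iInter_of_sequence_nonempty_isCompact_isClosed
      K hKanti hKne (hKc 0) hKcl
    refine ⟨f, fun i => Set.mem_iInter.mpr fun q => ?_, ?_⟩
    · exact ((Set.mem_iInter.mp hf q)).1 i
    · exact ((Set.mem_iInter.mp hf 0)).2

open MeasureTheory in
theorem stmt18 {G : Type*} [AddCommGroup G] [TopologicalSpace G]
    [IsTopologicalAddGroup G] [T2Space G] [LocallyCompactSpace G]
    [MeasurableSpace G] [BorelSpace G]
    (μ : Measure G) [IsFiniteMeasureOnCompacts μ] [μ.OuterRegular]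
    (h : ℕ) (hh : 0 < h) (θh : ℝ) (hθh : 0 ≤ θh)
    (θ : ℕ → ℝ) (hθnn : ∀ q, 0 ≤ θ q) (hθdec : ∀ q, θ (q + 1) ≤ θ q)
    (hθlim : Filter.Tendsto θ Filter.atTop (nhds θh))
    (Aq : ℕ → Set G) (hcomp : ∀ q, IsCompact (Aq q))
    (hdec : ∀ q, Aq (q + 1) ⊆ Aq q)
    (hmeas : ∀ q, μ (sumset (Aq q) h) = ENNReal.ofReal (θ q))
    (A : Set G) (hA : A = ⋂ q, Aq q) (hne : A.Nonempty) :
    μ (sumset A h) = ENNReal.ofReal θh := by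
  obtain ⟨n, rfl⟩ := Nat.exists_eq_add_of_lt hh
  rw [zero_add] at *
  have hanti : Antitone Aq := antitone_nat_of_succ_le hdec
  rw [hA, sumset_iInter Aq hcomp hanti n]
  have hKc : ∀ q, IsCompact (sumset (Aq q) (n + 1)) :=
    fun q => sumset_compact (hcomp q) (n + 1)
  have htend : Filter.Tendsto (fun q => μ (sumset (Aq q) (n + 1)))
      Filter.atTop (nhds (μ (⋂ q, sumset (Aq q) (n + 1)))) := by
    apply tendsto_measure_iInter_atTop
    · exact fun q => (hKc q).isClosed.nullMeasurableSet
    · exact fun p q hpq => sumset_mono (hanti hpq) _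
    · exact ⟨0, (hKc 0).measure_lt_top.ne⟩
  have htend2 : Filter.Tendsto (fun q => μ (sumset (Aq q) (n + 1)))
      Filter.atTop (nhds (ENNReal.ofReal θh)) := by
    simp only [hmeas]
    exact (ENNReal.continuous_ofReal.tendsto θh).comp hθlim
  exact tendsto_nhds_unique htend htend2
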